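/- For three unit vectors r₁, r₂, r₃ in ℝ³, |det(r₁,r₂,r₃)| ≤ 1, with equality achievable; consequently the imaginary part y = det(r₁,r₂,r₃)/4 of the third-order Bargmann invariant of pure qubit states ranges over [-1/4, 1/4]. -/

import Mathlib

open Real Matrix

/-- Determinant of the 3×3 matrix with columns `u`, `v`, `w`. -/
noncomputable def det3 (u v w : EuclideanSpace ℝ (Fin 3)) : ℝ :=
  Matrix.det (Matrix.of ![(u : Fin 3 → ℝ), (v : Fin 3 → ℝ), (w : Fin 3 → ℝ)])ᵀ


lemma det3_eq (u v w : EuclideanSpace ℝ (Fin 3)) :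
    det3 u v w = u 0 * (v 1 * w 2 - v 2 * w 1) - v 0 * (u 1 * w 2 - u 2 * w 1)
      + w 0 * (u 1 * v 2 - u 2 * v 1) := by
  rw [det3, Matrix.det_transpose, Matrix.det_fin_three]
  simp [Matrix.of_apply]
  ring

lemma norm_sq_aux (u : EuclideanSpace ℝ (Fin 3)) (h : ‖u‖ = 1) :
    u 0 ^ 2 + u 1 ^ 2 + u 2 ^ 2 = 1 := by
  have h2 : ‖u‖ ^ 2 = 1 := by rw [h]; norm_num
  rw [EuclideanSpace.norm_eq, Real.sq_sqrt (by positivity)] at h2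
  simpa [Fin.sum_univ_three, sq] using h2

lemma norm_one_aux (u : EuclideanSpace ℝ (Fin 3))
    (h : u 0 ^ 2 + u 1 ^ 2 + u 2 ^ 2 = 1) : ‖u‖ = 1 := by
  rw [EuclideanSpace.norm_eq]
  simp only [Fin.sum_univ_three, Real.norm_eq_abs, sq_abs]
  rw [h]; exact Real.sqrt_one

set_option maxHeartbeats 1000000 in
lemma key (a1 a2 a3 b1 b2 b3 c1 c2 c3 : ℝ)
    (ha : a1^2 + a2^2 + a3^2 = 1) (hb : b1^2 + b2^2 + b3^2 = 1)
    (hc : c1^2 + c2^2 + c3^2 = 1) :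
    |a1 * (b2 * c3 - b3 * c2) - b1 * (a2 * c3 - a3 * c2) + c1 * (a2 * b3 - a3 * b2)| ≤ 1 := by
  obtain ⟨p1, hp1⟩ : ∃ p, p = a2*b3 - a3*b2 := ⟨_, rfl⟩
  obtain ⟨p2, hp2⟩ : ∃ p, p = a3*b1 - a1*b3 := ⟨_, rfl⟩
  obtain ⟨p3, hp3⟩ : ∃ p, p = a1*b2 - a2*b1 := ⟨_, rfl⟩
  have hd : a1 * (b2 * c3 - b3 * c2) - b1 * (a2 * c3 - a3 * c2) + c1 * (a2 * b3 - a3 * b2)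
      = c1*p1 + c2*p2 + c3*p3 := by rw [hp1, hp2, hp3]; ring
  have hlag : p1^2 + p2^2 + p3^2
      = (a1^2+a2^2+a3^2)*(b1^2+b2^2+b3^2) - (a1*b1+a2*b2+a3*b3)^2 := by
    rw [hp1, hp2, hp3]; ring
  have hp : p1^2 + p2^2 + p3^2 ≤ 1 := by
    rw [hlag, ha, hb]; nlinarith [sq_nonneg (a1*b1 + a2*b2 + a3*b3)]
  have hcs : (c1*p1 + c2*p2 + c3*p3)^2 ≤ (p1^2+p2^2+p3^2) * (c1^2+c2^2+c3^2) := by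
    nlinarith [sq_nonneg (p1*c2 - p2*c1), sq_nonneg (p1*c3 - p3*c1), sq_nonneg (p2*c3 - p3*c2)]
  have hsq : (c1*p1 + c2*p2 + c3*p3)^2 ≤ 1 := by
    rw [hc] at hcs; nlinarith
  rw [hd, abs_le]
  constructor <;> nlinarith [hsq, sq_nonneg (c1*p1 + c2*p2 + c3*p3 - 1), sq_nonneg (c1*p1 + c2*p2 + c3*p3 + 1)]

lemma det_bound (r₁ r₂ r₃ : EuclideanSpace ℝ (Fin 3))
    (h1 : ‖r₁‖ = 1) (h2 : ‖r₂‖ = 1) (h3 : ‖r₃‖ = 1) : |det3 r₁ r₂ r₃| ≤ 1 := by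
  rw [det3_eq]
  exact key _ _ _ _ _ _ _ _ _ (norm_sq_aux _ h1) (norm_sq_aux _ h2) (norm_sq_aux _ h3)

lemma exists_det (t : ℝ) (ht : t ∈ Set.Icc (-1 : ℝ) 1) :
    ∃ r₁ r₂ r₃ : EuclideanSpace ℝ (Fin 3),
      ‖r₁‖ = 1 ∧ ‖r₂‖ = 1 ∧ ‖r₃‖ = 1 ∧ det3 r₁ r₂ r₃ = t := by
  obtain ⟨ht1, ht2⟩ := ht
  refine ⟨!₂[1,0,0], !₂[0,1,0], !₂[0, Real.sqrt (1 - t^2), t], ?_, ?_, ?_, ?_⟩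
  · apply norm_one_aux; norm_num [Matrix.cons_val_zero, Matrix.cons_val_one]; rfl
  · apply norm_one_aux; norm_num; rfl
  · apply norm_one_aux
    have : Real.sqrt (1 - t^2) ^ 2 = 1 - t^2 := Real.sq_sqrt (by nlinarith)
    show (0:ℝ)^2 + Real.sqrt (1-t^2)^2 + t^2 = 1
    rw [this]; ring
  · rw [det3_eq]
    show (1:ℝ) * ((1:ℝ) * t - 0 * Real.sqrt (1-t^2)) - 0 * ((0:ℝ) * t - 0 * Real.sqrt (1-t^2)) + 0 * ((0:ℝ)*0 - 0*1) = t
    ring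

theorem stmt_7 :
    (∀ r₁ r₂ r₃ : EuclideanSpace ℝ (Fin 3),
        ‖r₁‖ = 1 → ‖r₂‖ = 1 → ‖r₃‖ = 1 → |det3 r₁ r₂ r₃| ≤ 1) ∧
    (∃ r₁ r₂ r₃ : EuclideanSpace ℝ (Fin 3),
        ‖r₁‖ = 1 ∧ ‖r₂‖ = 1 ∧ ‖r₃‖ = 1 ∧ |det3 r₁ r₂ r₃| = 1) ∧
    {y : ℝ | ∃ r₁ r₂ r₃ : EuclideanSpace ℝ (Fin 3),
        ‖r₁‖ = 1 ∧ ‖r₂‖ = 1 ∧ ‖r₃‖ = 1 ∧ y = det3 r₁ r₂ r₃ / 4} =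
      Set.Icc (-(1 / 4) : ℝ) (1 / 4) := by
  refine ⟨det_bound, ?_, ?_⟩
  · obtain ⟨r₁, r₂, r₃, h1, h2, h3, hd⟩ := exists_det 1 (by norm_num)
    exact ⟨r₁, r₂, r₃, h1, h2, h3, by rw [hd]; norm_num⟩
  · ext y
    simp only [Set.mem_setOf_eq, Set.mem_Icc]
    constructor
    · rintro ⟨r₁, r₂, r₃, h1, h2, h3, rfl⟩
      have := det_bound r₁ r₂ r₃ h1 h2 h3
      rw [abs_le] at this
      constructor <;> [linarith; linarith]
    · rintro ⟨hl, hr⟩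
      obtain ⟨r₁, r₂, r₃, h1, h2, h3, hd⟩ := exists_det (4 * y) (by constructor <;> linarith)
      exact ⟨r₁, r₂, r₃, h1, h2, h3, by rw [hd]; ring⟩
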